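/- Let Q be a cube in a tree of metric cubes, let n ≥ 1 and let N̂ > 0 satisfy #Child(R) ≤ N̂ for every descendant R of Q within n-1 generations. For positive integers k ≤ n·N̂/(N̂+1), the number of n-th generation descendants R of Q whose chain from Q to R contains at least n-k central children satisfies #K_Q(n,k) ≤ N̂^k · n^n/(k^k·(n-k)^{n-k}). -/

import Mathlib

private lemma mem_of_append_mem (T : Set (List ℕ))
    (hpref : ∀ (l : List ℕ) (i : ℕ), l ++ [i] ∈ T → l ∈ T) :
    ∀ (s l : List ℕ), l ++ s ∈ T → l ∈ T := by
  intro s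
  induction s using List.reverseRecOn with
  | nil => intro l h; simpa using h
  | append_singleton s i ih =>
      intro l h
      rw [← List.append_assoc] at h
      exact ih l (hpref (l ++ s) i h)

private lemma ncard_biUnion_le {α β : Type*} (s : Finset α) (f : α → Set β)
    (hf : ∀ i ∈ s, (f i).Finite) :
    (⋃ i ∈ s, f i).ncard ≤ ∑ i ∈ s, (f i).ncard := by
  classical
  induction s using Finset.induction with
  | empty => simp
  | @insert a s hx ih =>
      rw [Finset.set_biUnion_insert, Finset.sum_insert hx]
      refine le_trans (Set.ncard_union_le _ _) ?_
      exact add_le_add le_rfl (ih (fun i hi => hf i (Finset.mem_insert_of_mem hi)))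

private lemma suffix_count (Nhat : ℝ) (hN : 0 ≤ Nhat) (n : ℕ) (T : Set (List ℕ))
    (hpref : ∀ (l : List ℕ) (i : ℕ), l ++ [i] ∈ T → l ∈ T)
    (hchild : ∀ l ∈ T, l.length < n →
      {i : ℕ | l ++ [i] ∈ T}.Finite ∧ (({i : ℕ | l ++ [i] ∈ T}.ncard : ℝ) ≤ Nhat)) :
    ∀ (m j : ℕ) (l : List ℕ), l.length + m ≤ n →
      {s : List ℕ | l ++ s ∈ T ∧ s.length = m ∧ m ≤ s.count 0 + j}.Finite ∧
      (({s : List ℕ | l ++ s ∈ T ∧ s.length = m ∧ m ≤ s.count 0 + j}.ncard : ℝ) ≤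
        ∑ i ∈ Finset.range (j + 1), (m.choose i : ℝ) * Nhat ^ i) := by
  intro m
  induction m with
  | zero =>
      intro j l _
      have hsub : {s : List ℕ | l ++ s ∈ T ∧ s.length = 0 ∧ 0 ≤ s.count 0 + j} ⊆ {[]} := by
        rintro s ⟨-, hs, -⟩
        simp [List.length_eq_zero_iff.mp hs]
      refine ⟨Set.Finite.subset (Set.finite_singleton _) hsub, ?_⟩
      have h1 : {s : List ℕ | l ++ s ∈ T ∧ s.length = 0 ∧ 0 ≤ s.count 0 + j}.ncard ≤ 1 := by
        simpa using Set.ncard_le_ncard hsub (Set.finite_singleton _)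
      have h1' : ({s : List ℕ | l ++ s ∈ T ∧ s.length = 0 ∧ 0 ≤ s.count 0 + j}.ncard : ℝ) ≤ 1 := by
        exact_mod_cast h1
      refine le_trans h1' ?_
      have := Finset.single_le_sum (f := fun i => ((0:ℕ).choose i : ℝ) * Nhat ^ i)
        (fun i _ => by positivity) (Finset.mem_range.mpr (Nat.succ_pos j))
      simpa using this
  | succ m ih =>
      intro j l hlen
      classical
      by_cases hne : {s : List ℕ | l ++ s ∈ T ∧ s.length = m + 1 ∧ m + 1 ≤ s.count 0 + j} = ∅
      · rw [hne]
        refine ⟨Set.finite_empty, ?_⟩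
        simp only [Set.ncard_empty, Nat.cast_zero]
        positivity
      obtain ⟨s₀, hs₀⟩ := Set.nonempty_iff_ne_empty.mpr hne
      have hlT : l ∈ T := mem_of_append_mem T hpref s₀ l hs₀.1
      have hlt : l.length < n := by omega
      obtain ⟨hCfin, hCcard⟩ := hchild l hlT hlt
      set C : Finset ℕ := hCfin.toFinset with hC
      have hCcard' : (C.card : ℝ) ≤ Nhat := by
        rwa [Set.ncard_eq_toFinset_card _ hCfin] at hCcard
      have hlen' : ∀ i : ℕ, (l ++ [i]).length + m ≤ n := by
        intro i; simp only [List.length_append, List.length_singleton]; omega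
      cases j with
      | zero =>
          set D0 := {s : List ℕ | (l ++ [0]) ++ s ∈ T ∧ s.length = m ∧ m ≤ s.count 0 + 0} with hD0
          obtain ⟨hfin0, hcard0⟩ := ih 0 (l ++ [0]) (hlen' 0)
          have hsub : {s : List ℕ | l ++ s ∈ T ∧ s.length = m + 1 ∧ m + 1 ≤ s.count 0 + 0} ⊆
              (fun s => 0 :: s) '' D0 := by
            rintro s ⟨hsT, hslen, hscnt⟩
            match s, hslen with
            | a :: s', hslen =>
              have hT' : (l ++ [a]) ++ s' ∈ T := by simpa [List.append_assoc] using hsT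
              have hl' : s'.length = m := by simpa using hslen
              have hc : s'.count 0 ≤ m := hl' ▸ (List.count_le_length : s'.count 0 ≤ s'.length)
              have ha : a = 0 := by
                by_contra ha
                have hcc : (a :: s').count 0 = s'.count 0 := by
                  simp [List.count_cons, Ne.symm ha, ha]
                omega
              subst ha
              have hcc : (0 :: s').count 0 = s'.count 0 + 1 := by simp
              exact ⟨s', ⟨hT', hl', by omega⟩, rfl⟩
          have hfin : {s : List ℕ | l ++ s ∈ T ∧ s.length = m + 1 ∧ m + 1 ≤ s.count 0 + 0}.Finite :=
            Set.Finite.subset (hfin0.image _) hsub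
          refine ⟨hfin, ?_⟩
          have h1 : {s : List ℕ | l ++ s ∈ T ∧ s.length = m + 1 ∧ m + 1 ≤ s.count 0 + 0}.ncard ≤
              D0.ncard :=
            le_trans (Set.ncard_le_ncard hsub (hfin0.image _)) (Set.ncard_image_le hfin0)
          have h2 : ({s : List ℕ | l ++ s ∈ T ∧ s.length = m + 1 ∧ m + 1 ≤ s.count 0 + 0}.ncard : ℝ)
              ≤ ∑ t ∈ Finset.range (0 + 1), (m.choose t : ℝ) * Nhat ^ t := by
            exact le_trans (by exact_mod_cast h1) hcard0
          simpa using h2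
      | succ j' =>
          set jf : ℕ → ℕ := fun i => if i = 0 then j' + 1 else j' with hjf
          set Di : ℕ → Set (List ℕ) := fun i =>
            {s : List ℕ | (l ++ [i]) ++ s ∈ T ∧ s.length = m ∧ m ≤ s.count 0 + jf i} with hDi
          have hIH : ∀ i : ℕ, (Di i).Finite ∧
              ((Di i).ncard : ℝ) ≤ ∑ t ∈ Finset.range (jf i + 1), (m.choose t : ℝ) * Nhat ^ t :=
            fun i => ih (jf i) (l ++ [i]) (hlen' i)
          have hsub : {s : List ℕ | l ++ s ∈ T ∧ s.length = m + 1 ∧ m + 1 ≤ s.count 0 + (j' + 1)}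
              ⊆ ⋃ i ∈ C, (fun s => i :: s) '' Di i := by
            rintro s ⟨hsT, hslen, hscnt⟩
            match s, hslen with
            | a :: s', hslen =>
              have hT' : (l ++ [a]) ++ s' ∈ T := by simpa [List.append_assoc] using hsT
              have haC : a ∈ C := by
                rw [hC, Set.Finite.mem_toFinset]
                exact mem_of_append_mem T hpref s' (l ++ [a]) hT'
              refine Set.mem_biUnion haC ⟨s', ⟨hT', by simpa using hslen, ?_⟩, rfl⟩
              by_cases ha : a = 0
              · subst ha
                simp only [List.count_cons_self] at hscnt
                simp only [hjf, if_pos rfl]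
                omega
              · have hcc : (a :: s').count 0 = s'.count 0 := by
                  simp [List.count_cons, Ne.symm ha, ha]
                rw [hcc] at hscnt
                simp only [hjf, if_neg ha]
                omega
          have hUfin : (⋃ i ∈ C, (fun s => i :: s) '' Di i).Finite :=
            Set.Finite.biUnion C.finite_toSet (fun i _ => ((hIH i).1).image _)
          have hfin : {s : List ℕ | l ++ s ∈ T ∧ s.length = m + 1 ∧
              m + 1 ≤ s.count 0 + (j' + 1)}.Finite := Set.Finite.subset hUfin hsub
          refine ⟨hfin, ?_⟩
          have h12 : {s : List ℕ | l ++ s ∈ T ∧ s.length = m + 1 ∧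
              m + 1 ≤ s.count 0 + (j' + 1)}.ncard ≤ ∑ i ∈ C, (Di i).ncard :=
            le_trans (le_trans (Set.ncard_le_ncard hsub hUfin)
              (ncard_biUnion_le C _ (fun i _ => ((hIH i).1).image _)))
              (Finset.sum_le_sum (fun i _ => Set.ncard_image_le (hIH i).1))
          have h3 : ({s : List ℕ | l ++ s ∈ T ∧ s.length = m + 1 ∧
              m + 1 ≤ s.count 0 + (j' + 1)}.ncard : ℝ) ≤
              ∑ i ∈ C, ∑ t ∈ Finset.range (jf i + 1), (m.choose t : ℝ) * Nhat ^ t := by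
            calc _ ≤ (((∑ i ∈ C, (Di i).ncard : ℕ)) : ℝ) := by exact_mod_cast h12
              _ = ∑ i ∈ C, ((Di i).ncard : ℝ) := by push_cast; rfl
              _ ≤ _ := Finset.sum_le_sum (fun i _ => (hIH i).2)
          set f : ℕ → ℝ := fun jj => ∑ t ∈ Finset.range (jj + 1), (m.choose t : ℝ) * Nhat ^ t
            with hf
          have hf0 : ∀ jj, 0 ≤ f jj := fun jj => by
            rw [hf]; positivity
          have h4 : ∑ i ∈ C, ∑ t ∈ Finset.range (jf i + 1), (m.choose t : ℝ) * Nhat ^ t ≤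
              f (j' + 1) + Nhat * f j' := by
            have hsum : ∀ i : ℕ, (∑ t ∈ Finset.range (jf i + 1), (m.choose t : ℝ) * Nhat ^ t)
                = f (jf i) := fun i => rfl
            by_cases h0 : 0 ∈ C
            · rw [← Finset.add_sum_erase C _ h0]
              have e1 : f (jf 0) = f (j' + 1) := by simp [hjf]
              have e2 : ∑ i ∈ C.erase 0, f (jf i) ≤ Nhat * f j' := by
                have : ∀ i ∈ C.erase 0, f (jf i) = f j' := by
                  intro i hi
                  have : i ≠ 0 := Finset.ne_of_mem_erase hi
                  simp [hjf, this]
                rw [Finset.sum_congr rfl this, Finset.sum_const, nsmul_eq_mul]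
                have hcle : ((C.erase 0).card : ℝ) ≤ Nhat :=
                  le_trans (by exact_mod_cast Finset.card_erase_le (a := 0) (s := C)) hCcard'
                exact mul_le_mul_of_nonneg_right hcle (hf0 j')
              simp only [hsum]
              rw [e1]
              exact add_le_add le_rfl e2
            · have : ∀ i ∈ C, f (jf i) = f j' := by
                intro i hi
                have : i ≠ 0 := fun h => h0 (h ▸ hi)
                simp [hjf, this]
              simp only [hsum]
              rw [Finset.sum_congr rfl this, Finset.sum_const, nsmul_eq_mul]
              have := mul_le_mul_of_nonneg_right hCcard' (hf0 j')
              nlinarith [hf0 (j' + 1)]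
          have key : f (j' + 1) + Nhat * f j' =
              ∑ i ∈ Finset.range (j' + 1 + 1), (((m + 1).choose i : ℝ)) * Nhat ^ i := by
            simp only [hf]
            rw [Finset.sum_range_succ' (fun i => (((m + 1).choose i : ℝ)) * Nhat ^ i) (j' + 1),
              Finset.sum_range_succ' (fun i => ((m.choose i : ℝ)) * Nhat ^ i) (j' + 1),
              Finset.mul_sum]
            have hterm : ∑ i ∈ Finset.range (j' + 1), (((m + 1).choose (i + 1) : ℝ)) * Nhat ^ (i + 1)
                = ∑ i ∈ Finset.range (j' + 1),
                  (((m.choose (i + 1) : ℝ)) * Nhat ^ (i + 1) + Nhat * (((m.choose i : ℝ)) * Nhat ^ i)) :=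
              Finset.sum_congr rfl (fun i _ => by
                push_cast [Nat.choose_succ_succ]
                ring)
            rw [hterm, Finset.sum_add_distrib]
            push_cast [Nat.choose_zero_right]
            ring
          exact le_trans h3 (le_trans h4 (le_of_eq key))

private lemma sum_choose_bound (n k : ℕ) (hk : 0 < k) (Nhat : ℝ) (hN : 0 < Nhat)
    (hkn : (k : ℝ) * (Nhat + 1) ≤ (n : ℝ) * Nhat) :
    ∑ i ∈ Finset.range (k + 1), (n.choose i : ℝ) * Nhat ^ i ≤
      Nhat ^ k * (n : ℝ) ^ n / ((k : ℝ) ^ k * (((n - k : ℕ) : ℝ)) ^ (n - k)) := by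
  have hk1 : (1:ℝ) ≤ k := by exact_mod_cast hk
  have hkltn : k < n := by
    by_contra h
    push_neg at h
    have hnk : (n:ℝ) ≤ k := by exact_mod_cast h
    nlinarith
  obtain ⟨m, rfl⟩ : ∃ m, n = k + m := ⟨n - k, by omega⟩
  have hm : 0 < m := by omega
  have hmk : (k + m) - k = m := by omega
  rw [hmk]
  have hkR : (0:ℝ) < k := by exact_mod_cast hk
  have hmR : (0:ℝ) < m := by exact_mod_cast hm
  have hkmN : (k:ℝ) ≤ Nhat * m := by
    have : ((k:ℕ):ℝ) + (m:ℝ) = ((k + m : ℕ) : ℝ) := by push_cast; ring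
    push_cast at hkn
    nlinarith
  set t : ℝ := k / (Nhat * m) with ht
  have ht0 : 0 < t := by positivity
  have ht1 : t ≤ 1 := by rw [ht, div_le_one (by positivity)]; exact hkmN
  have hNt : Nhat * t = (k:ℝ) / m := by rw [ht]; field_simp
  calc ∑ i ∈ Finset.range (k + 1), ((k + m).choose i : ℝ) * Nhat ^ i
      ≤ ∑ i ∈ Finset.range (k + 1), ((k + m).choose i : ℝ) * (Nhat * t) ^ i / t ^ k := by
        refine Finset.sum_le_sum (fun i hi => ?_)
        rw [le_div_iff₀ (by positivity), mul_pow]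
        have hik : i ≤ k := by
          have := Finset.mem_range.mp hi; omega
        have hti : t ^ k ≤ t ^ i := pow_le_pow_of_le_one ht0.le ht1 hik
        have hnn : (0:ℝ) ≤ ((k + m).choose i : ℝ) * Nhat ^ i := by positivity
        calc ((k + m).choose i : ℝ) * Nhat ^ i * t ^ k
            ≤ ((k + m).choose i : ℝ) * Nhat ^ i * t ^ i :=
              mul_le_mul_of_nonneg_left hti hnn
          _ = _ := by ring
    _ ≤ ∑ i ∈ Finset.range (k + m + 1), ((k + m).choose i : ℝ) * (Nhat * t) ^ i / t ^ k := by
        refine Finset.sum_le_sum_of_subset_of_nonneg ?_ (fun i _ _ => by positivity)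
        exact Finset.range_subset_range.mpr (by omega)
    _ = (Nhat * t + 1) ^ (k + m) / t ^ k := by
        rw [add_pow, Finset.sum_div]
        refine Finset.sum_congr rfl (fun i _ => ?_)
        rw [one_pow]
        ring
    _ = Nhat ^ k * ((k:ℝ) + m) ^ (k + m) / ((k:ℝ) ^ k * (m:ℝ) ^ m) := by
        rw [hNt, ht]
        have hm0 : (m:ℝ) ≠ 0 := hmR.ne'
        have hN0 : Nhat ≠ 0 := hN.ne'
        rw [div_add_one hm0, div_pow, div_pow, mul_pow, div_div_eq_mul_div, div_eq_div_iff (by positivity) (by positivity), pow_add]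
        field_simp
        ring
    _ = _ := by push_cast; ring_nf


/-- Cardinality estimate for descendants with many central children. We model a
rooted tree as a prefix-closed set `T` of lists of naturals (the root is `[]`,
the children of `l` are the lists `l ++ [i] ∈ T`, and the central/marked child
corresponds to `i = 0`). If every node within `n-1` generations of the root has
at most `N̂` children, and `k` is a positive integer with `k ≤ n·N̂/(N̂+1)`, then
the set `K(n,k)` of depth-`n` descendants whose chain from the root contains at
least `n-k` central children (equivalently, at most `k` non-central steps) has
cardinality at most `N̂^k · n^n / (k^k (n-k)^{n-k})`. -/
theorem central_descendants_count (n k : ℕ) (hk : 0 < k) (Nhat : ℝ) (hN : 0 < Nhat)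
    (hkn : (k : ℝ) ≤ (n : ℝ) * Nhat / (Nhat + 1))
    (T : Set (List ℕ)) (hroot : [] ∈ T)
    (hpref : ∀ (l : List ℕ) (i : ℕ), l ++ [i] ∈ T → l ∈ T)
    (hchild : ∀ l ∈ T, l.length < n →
      {i : ℕ | l ++ [i] ∈ T}.Finite ∧ (({i : ℕ | l ++ [i] ∈ T}.ncard : ℝ) ≤ Nhat)) :
    {l ∈ T | l.length = n ∧ n - k ≤ l.count 0}.Finite ∧
    (({l ∈ T | l.length = n ∧ n - k ≤ l.count 0}.ncard : ℝ) ≤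
      Nhat ^ k * (n : ℝ) ^ n / ((k : ℝ) ^ k * (((n - k : ℕ) : ℝ)) ^ (n - k))) := by
  have hkn' : (k : ℝ) * (Nhat + 1) ≤ (n : ℝ) * Nhat := by
    rw [le_div_iff₀ (by positivity)] at hkn
    exact hkn
  have hset : {l ∈ T | l.length = n ∧ n - k ≤ l.count 0} =
      {s : List ℕ | [] ++ s ∈ T ∧ s.length = n ∧ n ≤ s.count 0 + k} := by
    ext s
    simp only [Set.mem_setOf_eq, List.nil_append]
    constructor
    · rintro ⟨h1, h2, h3⟩; exact ⟨h1, h2, by omega⟩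
    · rintro ⟨h1, h2, h3⟩; exact ⟨h1, h2, by omega⟩
  obtain ⟨hfin, hcard⟩ := suffix_count Nhat hN.le n T hpref hchild n k [] (by simp)
  rw [hset]
  exact ⟨hfin, le_trans hcard (sum_choose_bound n k hk Nhat hN hkn')⟩
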